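/- Let L ≥ 0 on a finite-dimensional Hilbert space E. Set H = E ⊕ E, K = (P K̂, K̂)ᵀ with K̂ as above and P the projection onto ran L, D = [[0, iI],[-iI, 0]], F = [[0,0],[0,I]]. Then D is self-adjoint, F is an orthogonal projection, K is injective, D - zF is invertible for all z ∈ ℂ, and K*(D - zF)^{-1}K = zL. -/

import Mathlib

open scoped ComplexOrder

noncomputable def Matrix.PosSemidef.sqrt {n : Type*} [Fintype n] [DecidableEq n] {𝕜 : Type*}
    [RCLike 𝕜] {A : Matrix n n 𝕜} (hA : A.PosSemidef) : Matrix n n 𝕜 :=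
  hA.1.eigenvectorUnitary.1 * Matrix.diagonal ((↑) ∘ (√·) ∘ hA.1.eigenvalues) *
  (star hA.1.eigenvectorUnitary : Matrix n n 𝕜)
open Matrix in
private lemma posSemidef_sqrt' {n : ℕ} {L : Matrix (Fin n) (Fin n) ℂ} (hL : L.PosSemidef) :
    hL.sqrt.PosSemidef := by
  unfold Matrix.PosSemidef.sqrt
  have h := (posSemidef_diagonal_iff (d := ((↑) ∘ (√·) ∘ hL.1.eigenvalues : Fin n → ℂ))).mpr
    (fun i => by simp [Real.sqrt_nonneg])
  have := h.mul_mul_conjTranspose_same (hL.1.eigenvectorUnitary : Matrix (Fin n) (Fin n) ℂ)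
  simpa [Matrix.star_eq_conjTranspose] using this
open Matrix in
private lemma sqrt_mul_self' {n : ℕ} {L : Matrix (Fin n) (Fin n) ℂ} (hL : L.PosSemidef) :
    hL.sqrt * hL.sqrt = L := by
  unfold Matrix.PosSemidef.sqrt
  conv_rhs => rw [hL.1.spectral_theorem, Unitary.conjStarAlgAut_apply]
  have hU := Unitary.coe_star_mul_self hL.1.eigenvectorUnitary
  have hd : diagonal ((↑) ∘ (√·) ∘ hL.1.eigenvalues) * diagonal ((↑) ∘ (√·) ∘ hL.1.eigenvalues)
      = diagonal (RCLike.ofReal ∘ hL.1.eigenvalues : Fin n → ℂ) := by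
    rw [diagonal_mul_diagonal]
    congr 1; funext i
    simp only [Function.comp_apply]
    rw [← Complex.ofReal_mul, Real.mul_self_sqrt (hL.eigenvalues_nonneg i)]; rfl
  rw [← hd]
  simp only [Matrix.mul_assoc]
  congr 1
  rw [← Matrix.mul_assoc (star _ : Matrix (Fin n) (Fin n) ℂ), hU, Matrix.one_mul]
  rfl

open Matrix in
private lemma ext_of_mulVec' {m l : Type*} [Fintype l] [DecidableEq l]
    {A B : Matrix m l ℂ} (h : ∀ v, A *ᵥ v = B *ᵥ v) : A = B := by
  ext i j
  have := congrFun (h (Pi.single j 1)) i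
  simpa using this

open Matrix in
theorem stmt_13 {n : ℕ} (L : Matrix (Fin n) (Fin n) ℂ) (hL : L.PosSemidef)
    (Khat : Matrix (Fin n) (Fin n) ℂ)
    (hK1 : ∀ u ∈ LinearMap.ker L.mulVecLin, Khat.mulVec u = u)
    (hK2 : ∀ u ∈ LinearMap.range L.mulVecLin, Khat.mulVec u = hL.sqrt.mulVec u)
    (P : Matrix (Fin n) (Fin n) ℂ)
    (hP1 : P.IsHermitian) (hP2 : P * P = P)
    (hP3 : LinearMap.range P.mulVecLin = LinearMap.range L.mulVecLin)
    (D F : Matrix (Fin n ⊕ Fin n) (Fin n ⊕ Fin n) ℂ)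
    (hD : D = Matrix.fromBlocks 0 (Complex.I • 1) ((-Complex.I) • 1) 0)
    (hF : F = Matrix.fromBlocks 0 0 0 1)
    (K : Matrix (Fin n ⊕ Fin n) (Fin n) ℂ)
    (hK : K = Matrix.fromRows (P * Khat) Khat) :
    D.IsHermitian ∧ F.IsHermitian ∧ F * F = F ∧
    Function.Injective K.mulVec ∧
    ∀ z : ℂ, IsUnit (D - z • F) ∧
      K.conjTranspose * (D - z • F)⁻¹ * K = z • L := by
  subst hD hF hK
  set S := hL.sqrt with hSdef
  have hS : S.PosSemidef := posSemidef_sqrt' hL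
  have hSS : S * S = L := sqrt_mul_self' hL
  have hLu : ∀ u, L *ᵥ u = S *ᵥ (S *ᵥ u) := fun u => by
    rw [mulVec_mulVec, hSS]
  -- P acts as identity on range L
  have hPfix : ∀ x ∈ LinearMap.range L.mulVecLin, P *ᵥ x = x := by
    intro x hx
    rw [← hP3] at hx
    obtain ⟨w, rfl⟩ := hx
    show P *ᵥ (P *ᵥ w) = P *ᵥ w
    rw [mulVec_mulVec, hP2]
  have hPL : P * L = L := ext_of_mulVec' fun v => by
    rw [← mulVec_mulVec]
    exact hPfix _ ⟨v, rfl⟩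
  have hLP : L * P = L := by
    calc L * P = Lᴴ * Pᴴ := by rw [hL.1, hP1]
      _ = (P * L)ᴴ := (conjTranspose_mul P L).symm
      _ = Lᴴ := by rw [hPL]
      _ = L := hL.1
  -- kernels agree
  have hkerS : ∀ u, L *ᵥ u = 0 → S *ᵥ u = 0 := by
    intro u hu
    have h0 : star (S *ᵥ u) ⬝ᵥ (S *ᵥ u) = 0 := by
      calc star (S *ᵥ u) ⬝ᵥ (S *ᵥ u) = (star u ᵥ* Sᴴ) ⬝ᵥ (S *ᵥ u) := by rw [star_mulVec]
        _ = (star u ᵥ* S) ⬝ᵥ (S *ᵥ u) := by rw [hS.1]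
        _ = star u ⬝ᵥ (S *ᵥ (S *ᵥ u)) := (dotProduct_mulVec _ _ _).symm
        _ = star u ⬝ᵥ (L *ᵥ u) := by rw [← hLu]
        _ = 0 := by rw [hu, dotProduct_zero]
    exact dotProduct_star_self_eq_zero.mp h0
  -- ranges agree
  have hrange : LinearMap.range S.mulVecLin = LinearMap.range L.mulVecLin := by
    have hkereq : LinearMap.ker S.mulVecLin = LinearMap.ker L.mulVecLin := by
      ext u
      simp only [LinearMap.mem_ker, mulVecLin_apply]
      constructor
      · intro h; rw [hLu u, h, mulVec_zero]
      · exact hkerS u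
    have hle : LinearMap.range L.mulVecLin ≤ LinearMap.range S.mulVecLin := by
      rintro x ⟨v, rfl⟩
      exact ⟨S *ᵥ v, by simp only [mulVecLin_apply]; rw [← hLu]⟩
    refine (Submodule.eq_of_le_of_finrank_le hle ?_).symm
    have h1 := LinearMap.finrank_range_add_finrank_ker S.mulVecLin
    have h2 := LinearMap.finrank_range_add_finrank_ker L.mulVecLin
    rw [hkereq] at h1
    omega
  have hPS : P * S = S := ext_of_mulVec' fun v => by
    rw [← mulVec_mulVec]
    exact hPfix _ (hrange ▸ ⟨v, rfl⟩)
  have hSP : S * P = S := ext_of_mulVec' fun u => by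
    have hker : S *ᵥ (P *ᵥ u - u) = 0 := by
      apply hkerS
      rw [mulVec_sub, mulVec_mulVec, hLP, sub_self]
    rw [mulVec_sub] at hker
    rw [← mulVec_mulVec]
    exact sub_eq_zero.mp hker
  -- decomposition of Khat
  have hKdecomp : ∀ u, Khat *ᵥ u = S *ᵥ (P *ᵥ u) + (u - P *ᵥ u) := by
    intro u
    have h1 : Khat *ᵥ (P *ᵥ u) = S *ᵥ (P *ᵥ u) := hK2 _ (by rw [← hP3]; exact ⟨u, rfl⟩)
    have h2 : Khat *ᵥ (u - P *ᵥ u) = u - P *ᵥ u := by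
      apply hK1
      simp only [LinearMap.mem_ker, mulVecLin_apply]
      rw [mulVec_sub, mulVec_mulVec, hLP, sub_self]
    have h3 : P *ᵥ u + (u - P *ᵥ u) = u := by abel
    calc Khat *ᵥ u = Khat *ᵥ (P *ᵥ u + (u - P *ᵥ u)) := by rw [h3]
      _ = Khat *ᵥ (P *ᵥ u) + Khat *ᵥ (u - P *ᵥ u) := by rw [mulVec_add]
      _ = S *ᵥ (P *ᵥ u) + (u - P *ᵥ u) := by rw [h1, h2]
  have hPK : P * Khat = S := ext_of_mulVec' fun u => by
    rw [← mulVec_mulVec, hKdecomp u, mulVec_add, mulVec_sub, mulVec_mulVec _ P S,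
      hPS, mulVec_mulVec _ P P, hP2, mulVec_mulVec _ S P, hSP]
    abel
  have hSK : S * Khat = L := ext_of_mulVec' fun u => by
    have hz : S *ᵥ (u - P *ᵥ u) = 0 := by
      apply hkerS
      rw [mulVec_sub, mulVec_mulVec, hLP, sub_self]
    rw [← mulVec_mulVec, hKdecomp u, mulVec_add, hz, add_zero, ← hLu,
      mulVec_mulVec, hLP]
  have hKHS : Khatᴴ * S = L := by
    calc Khatᴴ * S = Khatᴴ * Sᴴ := by rw [hS.1]
      _ = (S * Khat)ᴴ := (conjTranspose_mul _ _).symm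
      _ = Lᴴ := by rw [hSK]
      _ = L := hL.1
  refine ⟨?_, ?_, ?_, ?_, ?_⟩
  · show _ᴴ = _
    ext (i | i) (j | j) <;>
      simp [fromBlocks, conjTranspose_apply, Matrix.one_apply, apply_ite,
        Complex.star_def, Complex.conj_I, eq_comm]
  · show _ᴴ = _
    ext (i | i) (j | j) <;> simp [fromBlocks, conjTranspose_apply, Matrix.one_apply, eq_comm]
  · simp [fromBlocks_multiply]
  · -- injectivity
    have hinj : ∀ u, fromRows (P * Khat) Khat *ᵥ u = 0 → u = 0 := by
      intro u hu
      rw [fromRows_mulVec] at hu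
      have h1 : (P * Khat) *ᵥ u = 0 := funext fun i => congrFun hu (Sum.inl i)
      have h2 : Khat *ᵥ u = 0 := funext fun i => congrFun hu (Sum.inr i)
      rw [hPK] at h1
      have hLu0 : L *ᵥ u = 0 := by rw [hLu u, h1, mulVec_zero]
      have h3 : Khat *ᵥ u = u := hK1 u (by simpa [LinearMap.mem_ker, mulVecLin_apply])
      rw [h2] at h3
      exact h3.symm
    intro a b hab
    have h0 : fromRows (P * Khat) Khat *ᵥ (a - b) = 0 := by
      rw [mulVec_sub, hab, sub_self]
    exact sub_eq_zero.mp (hinj _ h0)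
  · intro z
    have hDF : Matrix.fromBlocks 0 (Complex.I • 1) ((-Complex.I) • 1) 0 - z • Matrix.fromBlocks 0 0 0 (1 : Matrix (Fin n) (Fin n) ℂ) =
        fromBlocks (0 : Matrix (Fin n) (Fin n) ℂ) (Complex.I • (1 : Matrix (Fin n) (Fin n) ℂ)) ((-Complex.I) • (1 : Matrix (Fin n) (Fin n) ℂ)) (-(z • (1 : Matrix (Fin n) (Fin n) ℂ))) := by
      ext (i | i) (j | j) <;> simp [fromBlocks]
    set N := fromBlocks (z • (1 : Matrix (Fin n) (Fin n) ℂ)) (Complex.I • (1 : Matrix (Fin n) (Fin n) ℂ)) ((-Complex.I) • (1 : Matrix (Fin n) (Fin n) ℂ)) (0 : Matrix (Fin n) (Fin n) ℂ) with hNdef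
    have hNinv : (Matrix.fromBlocks 0 (Complex.I • 1) ((-Complex.I) • 1) 0 - z • Matrix.fromBlocks 0 0 0 (1 : Matrix (Fin n) (Fin n) ℂ)) * N = 1 := by
      rw [hDF, hNdef, fromBlocks_multiply, ← fromBlocks_one]
      simp [Matrix.smul_mul, Matrix.mul_smul, smul_smul, Complex.I_mul_I, mul_comm]
    refine ⟨(Matrix.isUnit_iff_isUnit_det _).mpr (Matrix.isUnit_det_of_right_inverse hNinv), ?_⟩
    rw [inv_eq_right_inv hNinv, hPK,
      conjTranspose_fromRows_eq_fromCols_conjTranspose, hNdef,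
      fromCols_mul_fromBlocks, fromCols_mul_fromRows, hS.1]
    rw [Matrix.mul_smul, Matrix.mul_smul, mul_one, mul_one, mul_zero, add_zero,
      Matrix.mul_smul, mul_one, Matrix.add_mul, Matrix.smul_mul, Matrix.smul_mul,
      Matrix.smul_mul, hSS, hKHS, hSK]
    module
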